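/- Let E be the space of bounded continuous functions ℝ^d → ℝ with the supremum norm, and let H : E → E be a map which is 1-Lipschitz for the supremum norm and commutes with translations, i.e. H(g(· + y)) = (H g)(· + y) for every g ∈ E and y ∈ ℝ^d. Suppose γ, f ∈ E and λ > 0 satisfy γ + λ(γ − H(γ)) = f. Then for every y ∈ ℝ^d, sup_{x ∈ ℝ^d} |γ(x + y) − γ(x)| ≤ sup_{x ∈ ℝ^d} |f(x + y) − f(x)|. In particular, if f is uniformly continuous with modulus of continuity ω, then γ has the same modulus of continuity ω. -/

import Mathlib

open BoundedContinuousFunction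

/-- let `E` be the space of bounded continuous functions `ℝ^d → ℝ` with the
sup norm, `H : E → E` a `1`-Lipschitz map commuting with translations. If
`γ + λ(γ − Hγ) = f` with `λ > 0`, then for every `y` the sup of `|γ(·+y) − γ(·)|` is
bounded by the sup of `|f(·+y) − f(·)|`; in particular any modulus of continuity of `f`
is a modulus of continuity of `γ`. -/
theorem resolvent_inherits_modulus_of_continuity
    (d : ℕ)
    (H : BoundedContinuousFunction (Fin d → ℝ) ℝ → BoundedContinuousFunction (Fin d → ℝ) ℝ)
    (hHlip : LipschitzWith 1 H)
    (hHcomm : ∀ (g : BoundedContinuousFunction (Fin d → ℝ) ℝ) (y : Fin d → ℝ),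
      H (g.compContinuous (ContinuousMap.mk (fun x => x + y) (by continuity)))
        = (H g).compContinuous (ContinuousMap.mk (fun x => x + y) (by continuity)))
    (γ f : BoundedContinuousFunction (Fin d → ℝ) ℝ) (l : ℝ) (hl : 0 < l)
    (heq : γ + l • (γ - H γ) = f) :
    (∀ (y : Fin d → ℝ) (K : ℝ), (∀ x, |f (x + y) - f x| ≤ K) →
      ∀ x, |γ (x + y) - γ x| ≤ K) ∧
    (∀ ω : ℝ → ℝ, (∀ x₁ x₂, |f x₁ - f x₂| ≤ ω ‖x₁ - x₂‖) →
      ∀ x₁ x₂, |γ x₁ - γ x₂| ≤ ω ‖x₁ - x₂‖) := by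
  have heqx : ∀ x, γ x + l * (γ x - H γ x) = f x := by
    intro x
    have := congrArg (fun g : BoundedContinuousFunction (Fin d → ℝ) ℝ => g x) heq
    simpa using this
  have main : ∀ (y : Fin d → ℝ) (K : ℝ), (∀ x, |f (x + y) - f x| ≤ K) →
      ∀ x, |γ (x + y) - γ x| ≤ K := by
    intro y K hK x
    set τ : ContinuousMap (Fin d → ℝ) (Fin d → ℝ) :=
      ContinuousMap.mk (fun x => x + y) (by continuity) with hτ
    set Tγ := γ.compContinuous τ with hTγ
    set Tf := f.compContinuous τ with hTf
    have hcomm := hHcomm γ y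
    have key : Tf - f = (1 + l) • (Tγ - γ) - l • (H Tγ - H γ) := by
      ext z
      have h1 : H Tγ z = H γ (z + y) := by
        rw [hcomm]; rfl
      have h2 := heqx z
      have h3 := heqx (z + y)
      simp only [BoundedContinuousFunction.coe_sub, BoundedContinuousFunction.coe_smul,
        Pi.sub_apply, Pi.smul_apply, smul_eq_mul, hTγ, hTf,
        BoundedContinuousFunction.compContinuous_apply, h1]
      show f (τ z) - f z = _
      have hτz : τ z = z + y := rfl
      rw [hτz, ← h2, ← h3, show H (γ.compContinuous τ) z = H γ (z + y) from h1]
      ring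
    have hn1 : ‖H Tγ - H γ‖ ≤ ‖Tγ - γ‖ := by
      have := hHlip.dist_le_mul Tγ γ
      simpa [dist_eq_norm] using this
    have hnorm : (1 + l) * ‖Tγ - γ‖ ≤ ‖Tf - f‖ + l * ‖Tγ - γ‖ := by
      have h4 : (1 + l) • (Tγ - γ) = (Tf - f) + l • (H Tγ - H γ) := by
        rw [key]; abel
      have hs1 : ‖(1 + l) • (Tγ - γ)‖ = (1 + l) * ‖Tγ - γ‖ := by
        rw [norm_smul (1 + l) (Tγ - γ), Real.norm_eq_abs, abs_of_pos (by linarith : (0:ℝ) < 1 + l)]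
      have hs2 : ‖l • (H Tγ - H γ)‖ = l * ‖H Tγ - H γ‖ := by
        rw [norm_smul l (H Tγ - H γ), Real.norm_eq_abs, abs_of_pos hl]
      calc (1 + l) * ‖Tγ - γ‖ = ‖(1 + l) • (Tγ - γ)‖ := hs1.symm
        _ = ‖(Tf - f) + l • (H Tγ - H γ)‖ := by rw [h4]
        _ ≤ ‖Tf - f‖ + ‖l • (H Tγ - H γ)‖ := norm_add_le _ _
        _ ≤ ‖Tf - f‖ + l * ‖Tγ - γ‖ := by
            rw [hs2]; nlinarith
    have hle : ‖Tγ - γ‖ ≤ ‖Tf - f‖ := by nlinarith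
    have hK0 : 0 ≤ K := le_trans (abs_nonneg _) (hK 0)
    have hTfK : ‖Tf - f‖ ≤ K := by
      apply BoundedContinuousFunction.norm_le hK0 |>.mpr
      intro z
      have hTfz : Tf z = f (z + y) := rfl
      simpa [Real.norm_eq_abs, hTfz] using hK z
    calc |γ (x + y) - γ x| = ‖(Tγ - γ) x‖ := by
          simp [Real.norm_eq_abs, hTγ]
          rfl
      _ ≤ ‖Tγ - γ‖ := BoundedContinuousFunction.norm_coe_le_norm _ _
      _ ≤ K := le_trans hle hTfK
  refine ⟨main, fun ω hω x₁ x₂ => ?_⟩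
  have h := main (x₁ - x₂) (ω ‖x₁ - x₂‖) (fun x => by
    have := hω (x + (x₁ - x₂)) x
    simpa using this) x₂
  simpa using h
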